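/- Suppose the family of probability measures {P^a(x,·) : x ∈ E, a ∈ U} satisfies the uniform ergodicity condition sup_{x,x',a,a',D} (P^a(x,D) − P^{a'}(x',D)) = Δ < 1. For a bounded measurable w with ‖w‖_sp ≤ M, define the Gibbs measures μ_{x,a,w}(B) = (∫_B e^w dP^a(x,·))/(∫_E e^w dP^a(x,·)). Then sup over w₁,w₂ with span ≤ M, over x,x' ∈ E, a,a' ∈ U, and measurable B, of (μ_{x,a,w₁}(B) − μ_{x',a',w₂}(B)) is strictly less than 1. -/

import Mathlib

open MeasureTheory

private lemma gibbs_lb {E : Type*} [MeasurableSpace E] (μ : Measure E)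
    [IsProbabilityMeasure μ] (w : E → ℝ) (hw : Measurable w) (x₀ : E) (M' : ℝ)
    (hM : ∀ y, |w y - w x₀| ≤ M') (B : Set E) (hB : MeasurableSet B) :
    Real.exp (-(2 * M')) * (μ B).toReal ≤
      (∫ y in B, Real.exp (w y) ∂μ) / (∫ y, Real.exp (w y) ∂μ) := by
  set L := Real.exp (w x₀ - M') with hL
  set Uu := Real.exp (w x₀ + M') with hU
  have hbound : ∀ y, L ≤ Real.exp (w y) ∧ Real.exp (w y) ≤ Uu := by
    intro y
    have h := abs_le.mp (hM y)
    constructor <;> apply Real.exp_le_exp.mpr <;> [linarith [h.2]; linarith [h.1]]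
  have hInt : Integrable (fun y => Real.exp (w y)) μ :=
    Integrable.mono' (integrable_const Uu) hw.exp.aestronglyMeasurable
      (ae_of_all _ fun y => by
        rw [Real.norm_eq_abs, abs_of_pos (Real.exp_pos _)]; exact (hbound y).2)
  have hIpos : 0 < ∫ y, Real.exp (w y) ∂μ := by
    calc (0:ℝ) < L := Real.exp_pos _
    _ = ∫ _y, L ∂μ := by simp
    _ ≤ ∫ y, Real.exp (w y) ∂μ :=
        integral_mono (integrable_const L) hInt fun y => (hbound y).1
  have hIle : ∫ y, Real.exp (w y) ∂μ ≤ Uu := by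
    calc ∫ y, Real.exp (w y) ∂μ ≤ ∫ _y, Uu ∂μ :=
          integral_mono hInt (integrable_const Uu) fun y => (hbound y).2
    _ = Uu := by simp
  have hBlb : L * (μ B).toReal ≤ ∫ y in B, Real.exp (w y) ∂μ := by
    have h1 : ∫ _y in B, L ∂μ = L * (μ B).toReal := by
      simp [integral_const]; rw [measureReal_def]; ring
    rw [← h1]
    exact integral_mono (integrable_const L) hInt.restrict fun y => (hbound y).1
  have hBnn : 0 ≤ ∫ y in B, Real.exp (w y) ∂μ :=
    integral_nonneg fun y => (Real.exp_pos _).le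
  have hLU : L = Real.exp (-(2 * M')) * Uu := by
    rw [hL, hU, ← Real.exp_add]; congr 1; ring
  have hUpos : (0:ℝ) < Uu := Real.exp_pos _
  calc Real.exp (-(2 * M')) * (μ B).toReal = L * (μ B).toReal / Uu := by
        rw [hLU]; field_simp
  _ ≤ (∫ y in B, Real.exp (w y) ∂μ) / (∫ y, Real.exp (w y) ∂μ) :=
      div_le_div₀ hBnn hBlb hIpos hIle

private lemma gibbs_ub {E : Type*} [MeasurableSpace E] (μ : Measure E)
    [IsProbabilityMeasure μ] (w : E → ℝ) (hw : Measurable w) (x₀ : E) (M' : ℝ)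
    (hM : ∀ y, |w y - w x₀| ≤ M') (B : Set E) (hB : MeasurableSet B) :
    (∫ y in B, Real.exp (w y) ∂μ) / (∫ y, Real.exp (w y) ∂μ) ≤
      1 - Real.exp (-(2 * M')) * (μ Bᶜ).toReal := by
  have hbound : ∀ y, Real.exp (w y) ≤ Real.exp (w x₀ + M') := by
    intro y
    have h := abs_le.mp (hM y)
    exact Real.exp_le_exp.mpr (by linarith [h.1])
  have hInt : Integrable (fun y => Real.exp (w y)) μ :=
    Integrable.mono' (integrable_const (Real.exp (w x₀ + M')))
      hw.exp.aestronglyMeasurable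
      (ae_of_all _ fun y => by
        rw [Real.norm_eq_abs, abs_of_pos (Real.exp_pos _)]; exact hbound y)
  have hIpos : 0 < ∫ y, Real.exp (w y) ∂μ := by
    calc (0:ℝ) < Real.exp (w x₀ - M') := Real.exp_pos _
    _ = ∫ _y, Real.exp (w x₀ - M') ∂μ := by simp
    _ ≤ ∫ y, Real.exp (w y) ∂μ := by
        refine integral_mono (integrable_const _) hInt fun y => ?_
        have h := abs_le.mp (hM y)
        exact Real.exp_le_exp.mpr (by linarith [h.2])
  have hsplit : (∫ y in B, Real.exp (w y) ∂μ) + (∫ y in Bᶜ, Real.exp (w y) ∂μ)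
      = ∫ y, Real.exp (w y) ∂μ := integral_add_compl hB hInt
  have hlb := gibbs_lb μ w hw x₀ M' hM Bᶜ hB.compl
  have : (∫ y in B, Real.exp (w y) ∂μ) / (∫ y, Real.exp (w y) ∂μ)
      = 1 - (∫ y in Bᶜ, Real.exp (w y) ∂μ) / (∫ y, Real.exp (w y) ∂μ) := by
    field_simp
    linarith [hsplit]
  rw [this]
  linarith [hlb]

/-- Under the uniform ergodicity condition `sup (P^a(x,D) − P^{a'}(x',D)) = Δ < 1`,
the Gibbs measures `μ_{x,a,w}(B) = (∫_B e^w dP^a(x,·))/(∫ e^w dP^a(x,·))` built from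
bounded measurable `w` with span seminorm at most `M` satisfy a uniform gap:
`sup (μ_{x,a,w₁}(B) − μ_{x',a',w₂}(B)) < 1`. -/
theorem gibbs_measures_uniform_gap
    {E U : Type*} [MeasurableSpace E]
    (P : E → U → Measure E) (hP : ∀ x a, IsProbabilityMeasure (P x a))
    (Δ : ℝ) (hΔ1 : Δ < 1)
    (hΔ : ∀ (x x' : E) (a a' : U) (D : Set E), MeasurableSet D →
      ((P x a) D).toReal - ((P x' a') D).toReal ≤ Δ)
    (M : ℝ) :
    ∃ Δ' : ℝ, Δ' < 1 ∧
      ∀ (w₁ w₂ : E → ℝ), Measurable w₁ → Measurable w₂ →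
        (∀ y z, w₁ y - w₁ z ≤ M) → (∀ y z, w₂ y - w₂ z ≤ M) →
        ∀ (x x' : E) (a a' : U) (B : Set E), MeasurableSet B →
          (∫ y in B, Real.exp (w₁ y) ∂(P x a)) / (∫ y, Real.exp (w₁ y) ∂(P x a))
            - (∫ y in B, Real.exp (w₂ y) ∂(P x' a')) /
                (∫ y, Real.exp (w₂ y) ∂(P x' a'))
          ≤ Δ' := by
  set M' := max M 0 with hM'
  set c := Real.exp (-(2 * M')) with hc
  have hcpos : 0 < c := Real.exp_pos _
  refine ⟨1 - c * (1 - Δ), by nlinarith, ?_⟩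
  intro w₁ w₂ hw₁ hw₂ hs₁ hs₂ x x' a a' B hB
  haveI := hP x a
  haveI := hP x' a'
  have hMM' : M ≤ M' := le_max_left _ _
  have hM₁ : ∀ y, |w₁ y - w₁ x| ≤ M' := fun y =>
    abs_le.mpr ⟨by linarith [hs₁ x y], by linarith [hs₁ y x]⟩
  have hM₂ : ∀ y, |w₂ y - w₂ x'| ≤ M' := fun y =>
    abs_le.mpr ⟨by linarith [hs₂ x' y], by linarith [hs₂ y x']⟩
  have h₁ := gibbs_ub (P x a) w₁ hw₁ x M' hM₁ B hB
  have h₂ := gibbs_lb (P x' a') w₂ hw₂ x' M' hM₂ B hB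
  have hcompl : ((P x a) B).toReal + ((P x a) Bᶜ).toReal = 1 := by
    have h := measure_add_measure_compl (μ := P x a) hB
    have := congrArg ENNReal.toReal h
    rwa [ENNReal.toReal_add (measure_ne_top _ _) (measure_ne_top _ _),
      measure_univ, ENNReal.toReal_one] at this
  have hΔB := hΔ x x' a a' B hB
  nlinarith [mul_le_mul_of_nonneg_left hΔB hcpos.le]
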